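/- Let A be a monoidal category and let (T, I, v, v₀, k) be a skew left warping of A whose object K equals the unit object I. Define μ_A = ρ_{TA}⁻¹∘(1_{TA}⊗v₀)∘v_{A,I}∘T(ρ_{TA}) : TTA → TA, η_A = ρ_{TA}⁻¹∘k_A : A → TA, ψ_{A,B} = v_{A,B}∘T(η_A⊗1_B) : T(A⊗B) → TA⊗TB, and ψ₀ = v₀ : TI → I. Then (T, μ, η) is a monad on A and (ψ, ψ₀) makes it an opmonoidal monad. -/

import Mathlib

open CategoryTheory MonoidalCategory

variable {V : Type*} [Category V] [MonoidalCategory V]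

/-- A skew left warping of the monoidal category `V` (Lack–Street, following Booker–Street):
a functor `T`, an object `K`, natural families `v_{X,Y} : T(TX ⊗ Y) ⟶ TX ⊗ TY` and
`k_X : X ⟶ TX ⊗ K`, and a morphism `v₀ : TK ⟶ I`, satisfying the five warping axioms
(W1)–(W5). -/
def IsSkewLeftWarping (T : V ⥤ V) (K : V)
    (v : ∀ X Y : V, T.obj (T.obj X ⊗ Y) ⟶ T.obj X ⊗ T.obj Y)
    (v₀ : T.obj K ⟶ 𝟙_ V) (k : ∀ X : V, X ⟶ T.obj X ⊗ K) : Prop :=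
  -- naturality of v
  (∀ (X X' Y Y' : V) (f : X ⟶ X') (g : Y ⟶ Y'),
    T.map (T.map f ⊗ₘ g) ≫ v X' Y' = v X Y ≫ (T.map f ⊗ₘ T.map g)) ∧
  -- naturality of k
  (∀ (X X' : V) (f : X ⟶ X'), f ≫ k X' = k X ≫ (T.map f ▷ K)) ∧
  -- (W1)
  (∀ X Y Z : V,
    v (T.obj X ⊗ Y) Z ≫ (v X Y ▷ T.obj Z) ≫ (α_ (T.obj X) (T.obj Y) (T.obj Z)).hom =
      T.map (v X Y ▷ Z) ≫ T.map (α_ (T.obj X) (T.obj Y) Z).hom ≫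
        v X (T.obj Y ⊗ Z) ≫ (T.obj X ◁ v Y Z)) ∧
  -- (W2)
  (∀ Y : V,
    v K Y ≫ (v₀ ▷ T.obj Y) ≫ (λ_ (T.obj Y)).hom =
      T.map (v₀ ▷ Y) ≫ T.map (λ_ Y).hom) ∧
  -- (W3)
  (∀ X : V, T.map (k X) ≫ v X K ≫ (T.obj X ◁ v₀) = (ρ_ (T.obj X)).inv) ∧
  -- (W4)
  (∀ X Y : V,
    k (T.obj X ⊗ Y) ≫ (v X Y ▷ K) ≫ (α_ (T.obj X) (T.obj Y) K).hom =
      T.obj X ◁ k Y) ∧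
  -- (W5)
  (k K ≫ (v₀ ▷ K) ≫ (λ_ K).hom = 𝟙 K)

/-- An opmonoidal monad on the monoidal category `V`: a monad `(T, μ, η)` together with an
opmonoidal structure `(ψ, ψ₀)` on `T` for which `μ` and `η` are opmonoidal natural
transformations. -/
def IsOpmonoidalMonad (T : V ⥤ V)
    (μ : ∀ X : V, T.obj (T.obj X) ⟶ T.obj X) (η : ∀ X : V, X ⟶ T.obj X)
    (ψ : ∀ X Y : V, T.obj (X ⊗ Y) ⟶ T.obj X ⊗ T.obj Y)
    (ψ₀ : T.obj (𝟙_ V) ⟶ 𝟙_ V) : Prop :=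
  -- naturality of μ and η
  (∀ (X Y : V) (f : X ⟶ Y), T.map (T.map f) ≫ μ Y = μ X ≫ T.map f) ∧
  (∀ (X Y : V) (f : X ⟶ Y), f ≫ η Y = η X ≫ T.map f) ∧
  -- monad axioms
  (∀ X : V, μ (T.obj X) ≫ μ X = T.map (μ X) ≫ μ X) ∧
  (∀ X : V, η (T.obj X) ≫ μ X = 𝟙 (T.obj X)) ∧
  (∀ X : V, T.map (η X) ≫ μ X = 𝟙 (T.obj X)) ∧
  -- naturality of ψ
  (∀ (X X' Y Y' : V) (f : X ⟶ X') (g : Y ⟶ Y'),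
    T.map (f ⊗ₘ g) ≫ ψ X' Y' = ψ X Y ≫ (T.map f ⊗ₘ T.map g)) ∧
  -- opmonoidal functor axioms: coassociativity and counitality of ψ
  (∀ X Y Z : V,
    T.map (α_ X Y Z).hom ≫ ψ X (Y ⊗ Z) ≫ (T.obj X ◁ ψ Y Z) =
      ψ (X ⊗ Y) Z ≫ (ψ X Y ▷ T.obj Z) ≫ (α_ (T.obj X) (T.obj Y) (T.obj Z)).hom) ∧
  (∀ X : V, ψ (𝟙_ V) X ≫ (ψ₀ ▷ T.obj X) ≫ (λ_ (T.obj X)).hom = T.map (λ_ X).hom) ∧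
  (∀ X : V, ψ X (𝟙_ V) ≫ (T.obj X ◁ ψ₀) ≫ (ρ_ (T.obj X)).hom = T.map (ρ_ X).hom) ∧
  -- μ is opmonoidal
  (∀ X Y : V,
    T.map (ψ X Y) ≫ ψ (T.obj X) (T.obj Y) ≫ (μ X ⊗ₘ μ Y) = μ (X ⊗ Y) ≫ ψ X Y) ∧
  (T.map ψ₀ ≫ ψ₀ = μ (𝟙_ V) ≫ ψ₀) ∧
  -- η is opmonoidal
  (∀ X Y : V, η (X ⊗ Y) ≫ ψ X Y = η X ⊗ₘ η Y) ∧
  (η (𝟙_ V) ≫ ψ₀ = 𝟙 (𝟙_ V))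

namespace SkewWarpingAux

section Defs

variable (T : V ⥤ V) (v : ∀ X Y : V, T.obj (T.obj X ⊗ Y) ⟶ T.obj X ⊗ T.obj Y)
  (v₀ : T.obj (𝟙_ V) ⟶ 𝟙_ V) (k : ∀ X : V, X ⟶ T.obj X ⊗ 𝟙_ V)

/-- The unit of the induced monad. -/
def wη : ∀ X : V, X ⟶ T.obj X := fun X => k X ≫ (ρ_ (T.obj X)).hom

/-- The multiplication of the induced monad. -/
def wμ : ∀ X : V, T.obj (T.obj X) ⟶ T.obj X := fun X =>
  T.map (ρ_ (T.obj X)).inv ≫ v X (𝟙_ V) ≫ (T.obj X ◁ v₀) ≫ (ρ_ (T.obj X)).hom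

/-- The opmonoidal structure of the induced monad. -/
def wψ : ∀ X Y : V, T.obj (X ⊗ Y) ⟶ T.obj X ⊗ T.obj Y := fun X Y =>
  T.map (wη T k X ▷ Y) ≫ v X Y

end Defs

section Lemmas

variable {T : V ⥤ V} {v : ∀ X Y : V, T.obj (T.obj X ⊗ Y) ⟶ T.obj X ⊗ T.obj Y}
  {v₀ : T.obj (𝟙_ V) ⟶ 𝟙_ V} {k : ∀ X : V, X ⟶ T.obj X ⊗ 𝟙_ V}

lemma eta_nat (h : IsSkewLeftWarping T (𝟙_ V) v v₀ k) :
    ∀ (X Y : V) (f : X ⟶ Y), f ≫ wη T k Y = wη T k X ≫ T.map f := by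
  obtain ⟨-, kn, -⟩ := h
  intro X Y f
  simp only [wη]
  rw [← Category.assoc, kn, Category.assoc, rightUnitor_naturality, Category.assoc]

lemma v_natL (h : IsSkewLeftWarping T (𝟙_ V) v v₀ k) (X X' : V) (f : X ⟶ X') (Y : V) :
    T.map (T.map f ▷ Y) ≫ v X' Y = v X Y ≫ (T.map f ▷ T.obj Y) := by
  obtain ⟨vn, -⟩ := h
  simpa using vn X X' Y Y f (𝟙 Y)

lemma v_natR (h : IsSkewLeftWarping T (𝟙_ V) v v₀ k) (X Y Y' : V) (g : Y ⟶ Y') :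
    v X Y ≫ (T.obj X ◁ T.map g) = T.map (T.obj X ◁ g) ≫ v X Y' := by
  obtain ⟨vn, -⟩ := h
  simpa using (vn X X Y Y' (𝟙 X) g).symm

lemma k_unit (h : IsSkewLeftWarping T (𝟙_ V) v v₀ k) :
    k (𝟙_ V) ≫ (ρ_ (T.obj (𝟙_ V))).hom ≫ v₀ = 𝟙 (𝟙_ V) := by
  obtain ⟨-, -, -, -, -, -, W5⟩ := h
  rw [← rightUnitor_naturality, ← unitors_equal]
  exact W5

lemma eta_unit (h : IsSkewLeftWarping T (𝟙_ V) v v₀ k) :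
    wη T k (𝟙_ V) ≫ v₀ = 𝟙 (𝟙_ V) := by
  simp only [wη, Category.assoc]; exact k_unit h

/-- W4, solved for `k (TX ⊗ Y) ≫ (v X Y ▷ 𝟙)`. -/
lemma W4' (h : IsSkewLeftWarping T (𝟙_ V) v v₀ k) (X Y : V) :
    k (T.obj X ⊗ Y) ≫ (v X Y ▷ 𝟙_ V) =
    (T.obj X ◁ k Y) ≫ (α_ (T.obj X) (T.obj Y) (𝟙_ V)).inv := by
  obtain ⟨-, -, -, -, -, W4, -⟩ := h
  rw [← W4 X Y, Category.assoc, Category.assoc, Iso.hom_inv_id, Category.comp_id]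

lemma mu_right_unit (h : IsSkewLeftWarping T (𝟙_ V) v v₀ k) :
    ∀ X : V, T.map (wη T k X) ≫ wμ T v v₀ X = 𝟙 (T.obj X) := by
  obtain ⟨-, -, -, -, W3, -⟩ := h
  intro X
  simp only [wη, wμ, Functor.map_comp, Category.assoc]
  simp only [← Functor.map_comp_assoc, Category.assoc, Iso.hom_inv_id, Category.comp_id]
  rw [reassoc_of% (W3 X), Iso.inv_hom_id]

lemma mu_left_unit (h : IsSkewLeftWarping T (𝟙_ V) v v₀ k) :
    ∀ X : V, wη T k (T.obj X) ≫ wμ T v v₀ X = 𝟙 (T.obj X) := by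
  have hk1 := k_unit h
  have hW4' := W4' h
  obtain ⟨-, kn, -⟩ := h
  intro X
  simp only [wη, wμ]
  simp only [Category.assoc]
  rw [← rightUnitor_naturality_assoc, ← Category.assoc, ← kn, Category.assoc,
    ← rightUnitor_naturality_assoc, reassoc_of% (hW4' X (𝟙_ V)), rightUnitor_tensor_hom]
  simp only [Category.assoc, Iso.inv_hom_id_assoc]
  rw [← MonoidalCategory.whiskerLeft_comp_assoc,
    ← MonoidalCategory.whiskerLeft_comp_assoc, Category.assoc, hk1,
    MonoidalCategory.whiskerLeft_id, Category.id_comp, Iso.inv_hom_id]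

lemma eta_tensor (h : IsSkewLeftWarping T (𝟙_ V) v v₀ k) :
    ∀ X Y : V, wη T k (X ⊗ Y) ≫ wψ T v k X Y = wη T k X ⊗ₘ wη T k Y := by
  have hW4' := W4' h
  obtain ⟨-, kn, -⟩ := h
  intro X Y
  simp only [wη, wψ, Category.assoc]
  rw [← rightUnitor_naturality_assoc, ← Category.assoc, ← kn,
    Category.assoc, ← rightUnitor_naturality, reassoc_of% (hW4' X Y),
    rightUnitor_tensor_hom]
  simp only [Category.assoc, Iso.inv_hom_id_assoc]
  rw [MonoidalCategory.tensorHom_def, comp_whiskerRight, MonoidalCategory.whiskerLeft_comp,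
    Category.assoc]

lemma psi_nat (h : IsSkewLeftWarping T (𝟙_ V) v v₀ k) :
    ∀ (X X' Y Y' : V) (f : X ⟶ X') (g : Y ⟶ Y'),
    T.map (f ⊗ₘ g) ≫ wψ T v k X' Y' = wψ T v k X Y ≫ (T.map f ⊗ₘ T.map g) := by
  have hηn := eta_nat h
  obtain ⟨vn, -⟩ := h
  intro X X' Y Y' f g
  simp only [wψ]
  rw [← Functor.map_comp_assoc]
  have e : (f ⊗ₘ g) ≫ (wη T k X' ▷ Y') = (wη T k X ▷ Y) ≫ (T.map f ⊗ₘ g) := by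
    simp only [MonoidalCategory.tensorHom_def, Category.assoc]
    rw [whisker_exchange, ← comp_whiskerRight_assoc, hηn X X' f,
      comp_whiskerRight_assoc]
  rw [e, Functor.map_comp_assoc, vn, Category.assoc]

lemma mu_nat (h : IsSkewLeftWarping T (𝟙_ V) v v₀ k) :
    ∀ (X Y : V) (f : X ⟶ Y),
    T.map (T.map f) ≫ wμ T v v₀ Y = wμ T v v₀ X ≫ T.map f := by
  obtain ⟨vn, -⟩ := h
  intro X Y f
  simp only [wμ]
  rw [← Functor.map_comp_assoc, rightUnitor_inv_naturality, Functor.map_comp_assoc,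
    ← tensorHom_id, reassoc_of% (vn X Y (𝟙_ V) (𝟙_ V) f (𝟙 (𝟙_ V))),
    CategoryTheory.Functor.map_id, tensorHom_id, ← whisker_exchange_assoc,
    rightUnitor_naturality]
  simp only [Category.assoc]

lemma psi_counit_left (h : IsSkewLeftWarping T (𝟙_ V) v v₀ k) :
    ∀ X : V,
    wψ T v k (𝟙_ V) X ≫ (v₀ ▷ T.obj X) ≫ (λ_ (T.obj X)).hom = T.map (λ_ X).hom := by
  have hu := eta_unit h
  obtain ⟨-, -, -, W2, -⟩ := h
  intro X
  simp only [wψ, Category.assoc]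
  rw [W2 X, ← Functor.map_comp_assoc, ← comp_whiskerRight, hu]
  simp

lemma psi_counit_right (h : IsSkewLeftWarping T (𝟙_ V) v v₀ k) :
    ∀ X : V,
    wψ T v k X (𝟙_ V) ≫ (T.obj X ◁ v₀) ≫ (ρ_ (T.obj X)).hom = T.map (ρ_ X).hom := by
  obtain ⟨-, -, -, -, W3, -⟩ := h
  intro X
  have e : wη T k X ▷ 𝟙_ V = (ρ_ X).hom ≫ k X := by
    simp [wη]
  simp only [wψ, Category.assoc]
  rw [e, Functor.map_comp_assoc, reassoc_of% (W3 X), Iso.inv_hom_id, Category.comp_id]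

lemma mu_psi0 (h : IsSkewLeftWarping T (𝟙_ V) v v₀ k) :
    T.map v₀ ≫ v₀ = wμ T v v₀ (𝟙_ V) ≫ v₀ := by
  obtain ⟨-, -, -, W2, -⟩ := h
  symm
  simp only [wμ, Category.assoc]
  rw [← rightUnitor_naturality, whisker_exchange_assoc, ← unitors_equal,
    leftUnitor_naturality, reassoc_of% (W2 (𝟙_ V)), ← Functor.map_comp_assoc,
    ← Functor.map_comp_assoc]
  have e : ((ρ_ (T.obj (𝟙_ V))).inv ≫ v₀ ▷ 𝟙_ V) ≫ (λ_ (𝟙_ V)).hom = v₀ := by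
    rw [Category.assoc, unitors_equal, rightUnitor_naturality, Iso.inv_hom_id_assoc]
  rw [e]

/-- The coherence fact `((X ◁ v₀) ▷ W) ≫ (ρ ▷ W) = α ≫ (X ◁ (v₀ ▷ W)) ≫ (X ◁ λ)`. -/
lemma factA (X : V) (v₀' : T.obj (𝟙_ V) ⟶ 𝟙_ V) (W : V) :
    ((T.obj X ◁ v₀') ▷ W) ≫ ((ρ_ (T.obj X)).hom ▷ W) =
    (α_ (T.obj X) (T.obj (𝟙_ V)) W).hom ≫ (T.obj X ◁ (v₀' ▷ W)) ≫
      (T.obj X ◁ (λ_ W).hom) := by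
  rw [← associator_naturality_middle_assoc, triangle]

lemma v_mu_core (h : IsSkewLeftWarping T (𝟙_ V) v v₀ k) (X Z : V) :
    v (T.obj X ⊗ 𝟙_ V) Z ≫ (v X (𝟙_ V) ▷ T.obj Z) ≫
      ((T.obj X ◁ v₀) ▷ T.obj Z) ≫ ((ρ_ (T.obj X)).hom ▷ T.obj Z) =
    T.map ((v X (𝟙_ V) ≫ (T.obj X ◁ v₀) ≫ (ρ_ (T.obj X)).hom) ▷ Z) ≫ v X Z := by
  have hvnR := v_natR h
  obtain ⟨vn, -, W1, W2, -⟩ := h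
  rw [factA, reassoc_of% (W1 X (𝟙_ V) Z)]
  rw [← MonoidalCategory.whiskerLeft_comp_assoc, ← MonoidalCategory.whiskerLeft_comp]
  rw [Category.assoc, W2 Z, ← Functor.map_comp]
  rw [hvnR X (T.obj (𝟙_ V) ⊗ Z) Z ((v₀ ▷ Z) ≫ (λ_ Z).hom)]
  rw [← Functor.map_comp_assoc, ← Functor.map_comp_assoc]
  congr 2
  simp only [comp_whiskerRight, MonoidalCategory.whiskerLeft_comp, Category.assoc]
  rw [factA]

lemma v_mu (h : IsSkewLeftWarping T (𝟙_ V) v v₀ k) (X Z : V) :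
    T.map (wμ T v v₀ X ▷ Z) ≫ v X Z =
    v (T.obj X) Z ≫ (wμ T v v₀ X ▷ T.obj Z) := by
  have core := v_mu_core h X Z
  have hvnL := v_natL h
  simp only [wμ]
  rw [comp_whiskerRight, Functor.map_comp_assoc, ← core, ← Category.assoc,
    hvnL (T.obj X) (T.obj X ⊗ 𝟙_ V) (ρ_ (T.obj X)).inv Z]
  simp only [comp_whiskerRight, Category.assoc]

lemma mu_v (h : IsSkewLeftWarping T (𝟙_ V) v v₀ k) (X Y : V) :
    wμ T v v₀ (T.obj X ⊗ Y) ≫ v X Y =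
    T.map (v X Y) ≫ v X (T.obj Y) ≫ (T.obj X ◁ wμ T v v₀ Y) := by
  have hvnR := v_natR h
  obtain ⟨vn, -, W1, -⟩ := h
  simp only [wμ, Category.assoc]
  rw [← rightUnitor_naturality, whisker_exchange_assoc, rightUnitor_tensor_hom,
    associator_naturality_right_assoc, reassoc_of% (W1 X Y (𝟙_ V))]
  rw [← MonoidalCategory.whiskerLeft_comp_assoc, ← MonoidalCategory.whiskerLeft_comp]
  rw [← Functor.map_comp_assoc, ← rightUnitor_inv_naturality, ← Functor.map_comp_assoc]
  simp only [Category.assoc]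
  rw [← whiskerLeft_rightUnitor_inv, Functor.map_comp_assoc]
  rw [← reassoc_of% (hvnR X (T.obj Y) (T.obj Y ⊗ 𝟙_ V) (ρ_ (T.obj Y)).inv)]
  simp only [MonoidalCategory.whiskerLeft_comp, Category.assoc]

lemma mu_assoc (h : IsSkewLeftWarping T (𝟙_ V) v v₀ k) :
    ∀ X : V, wμ T v v₀ (T.obj X) ≫ wμ T v v₀ X =
      T.map (wμ T v v₀ X) ≫ wμ T v v₀ X := by
  have L3 := v_mu h
  intro X
  calc wμ T v v₀ (T.obj X) ≫ wμ T v v₀ X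
      = T.map (ρ_ (T.obj (T.obj X))).inv ≫ v (T.obj X) (𝟙_ V) ≫
          (T.obj (T.obj X) ◁ v₀) ≫ (ρ_ (T.obj (T.obj X))).hom ≫ wμ T v v₀ X := by
        simp only [wμ, Category.assoc]
    _ = T.map (ρ_ (T.obj (T.obj X))).inv ≫ v (T.obj X) (𝟙_ V) ≫
          (wμ T v v₀ X ▷ T.obj (𝟙_ V)) ≫ (T.obj X ◁ v₀) ≫ (ρ_ (T.obj X)).hom := by
        rw [← rightUnitor_naturality, whisker_exchange_assoc]
    _ = T.map (ρ_ (T.obj (T.obj X))).inv ≫ T.map (wμ T v v₀ X ▷ 𝟙_ V) ≫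
          v X (𝟙_ V) ≫ (T.obj X ◁ v₀) ≫ (ρ_ (T.obj X)).hom := by
        rw [← reassoc_of% (L3 X (𝟙_ V))]
    _ = T.map (wμ T v v₀ X) ≫ T.map (ρ_ (T.obj X)).inv ≫
          v X (𝟙_ V) ≫ (T.obj X ◁ v₀) ≫ (ρ_ (T.obj X)).hom := by
        rw [← Functor.map_comp_assoc, ← rightUnitor_inv_naturality,
          Functor.map_comp_assoc]
    _ = T.map (wμ T v v₀ X) ≫ wμ T v v₀ X := by simp only [wμ, Category.assoc]

lemma mu_psi (h : IsSkewLeftWarping T (𝟙_ V) v v₀ k) :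
    ∀ X Y : V, T.map (wψ T v k X Y) ≫ wψ T v k (T.obj X) (T.obj Y) ≫
      (wμ T v v₀ X ⊗ₘ wμ T v v₀ Y) = wμ T v v₀ (X ⊗ Y) ≫ wψ T v k X Y := by
  have L3 := v_mu h
  have L2 := mu_v h
  have hlu := mu_left_unit h
  have hμn := mu_nat h
  intro X Y
  calc T.map (wψ T v k X Y) ≫ wψ T v k (T.obj X) (T.obj Y) ≫
        (wμ T v v₀ X ⊗ₘ wμ T v v₀ Y)
      = T.map (wψ T v k X Y) ≫ T.map (wη T k (T.obj X) ▷ T.obj Y) ≫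
          v (T.obj X) (T.obj Y) ≫ (wμ T v v₀ X ▷ T.obj (T.obj Y)) ≫
          (T.obj X ◁ wμ T v v₀ Y) := by
        simp only [wψ, MonoidalCategory.tensorHom_def, Category.assoc]
    _ = T.map (wψ T v k X Y) ≫ T.map (wη T k (T.obj X) ▷ T.obj Y) ≫
          T.map (wμ T v v₀ X ▷ T.obj Y) ≫ v X (T.obj Y) ≫
          (T.obj X ◁ wμ T v v₀ Y) := by
        rw [← reassoc_of% (L3 X (T.obj Y))]
    _ = T.map (wψ T v k X Y) ≫ v X (T.obj Y) ≫ (T.obj X ◁ wμ T v v₀ Y) := by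
        have cancel : T.map (wη T k (T.obj X) ▷ T.obj Y) ≫
            T.map (wμ T v v₀ X ▷ T.obj Y) = 𝟙 (T.obj (T.obj X ⊗ T.obj Y)) := by
          rw [← Functor.map_comp, ← comp_whiskerRight, hlu X,
            MonoidalCategory.id_whiskerRight, CategoryTheory.Functor.map_id]
        rw [reassoc_of% cancel]
    _ = T.map (T.map (wη T k X ▷ Y)) ≫ T.map (v X Y) ≫ v X (T.obj Y) ≫
          (T.obj X ◁ wμ T v v₀ Y) := by
        simp only [wψ, Functor.map_comp, Category.assoc]
    _ = T.map (T.map (wη T k X ▷ Y)) ≫ wμ T v v₀ (T.obj X ⊗ Y) ≫ v X Y := by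
        rw [L2]
    _ = wμ T v v₀ (X ⊗ Y) ≫ T.map (wη T k X ▷ Y) ≫ v X Y := by
        rw [reassoc_of% (hμn (X ⊗ Y) (T.obj X ⊗ Y) (wη T k X ▷ Y))]
    _ = wμ T v v₀ (X ⊗ Y) ≫ wψ T v k X Y := by simp only [wψ]

lemma psi_coassoc (h : IsSkewLeftWarping T (𝟙_ V) v v₀ k) :
    ∀ X Y Z : V,
    T.map (α_ X Y Z).hom ≫ wψ T v k X (Y ⊗ Z) ≫ (T.obj X ◁ wψ T v k Y Z) =
    wψ T v k (X ⊗ Y) Z ≫ (wψ T v k X Y ▷ T.obj Z) ≫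
      (α_ (T.obj X) (T.obj Y) (T.obj Z)).hom := by
  have hvnL := v_natL h
  have hvnR := v_natR h
  have et := eta_tensor h
  obtain ⟨vn, -, W1, -⟩ := h
  intro X Y Z
  have et' : wη T k X ⊗ₘ wη T k Y =
      wη T k (X ⊗ Y) ≫ T.map (wη T k X ▷ Y) ≫ v X Y := by
    rw [← et X Y]; simp only [wψ]
  have inner : (α_ X Y Z).hom ≫ (wη T k X ▷ (Y ⊗ Z)) ≫
      (T.obj X ◁ (wη T k Y ▷ Z)) =
      (wη T k (X ⊗ Y) ▷ Z) ≫ (T.map (wη T k X ▷ Y) ▷ Z) ≫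
        (v X Y ▷ Z) ≫ (α_ (T.obj X) (T.obj Y) Z).hom := by
    calc (α_ X Y Z).hom ≫ (wη T k X ▷ (Y ⊗ Z)) ≫ (T.obj X ◁ (wη T k Y ▷ Z))
        = (α_ X Y Z).hom ≫ (wη T k X ⊗ₘ (wη T k Y ▷ Z)) := by
          rw [MonoidalCategory.tensorHom_def]
      _ = ((wη T k X ⊗ₘ wη T k Y) ▷ Z) ≫ (α_ (T.obj X) (T.obj Y) Z).hom := by
          have := associator_naturality (wη T k X) (wη T k Y) (𝟙 Z)
          simp only [tensorHom_id] at this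
          exact this.symm
      _ = ((wη T k (X ⊗ Y) ≫ T.map (wη T k X ▷ Y) ≫ v X Y) ▷ Z) ≫
            (α_ (T.obj X) (T.obj Y) Z).hom := by rw [← et']
      _ = (wη T k (X ⊗ Y) ▷ Z) ≫ (T.map (wη T k X ▷ Y) ▷ Z) ≫
            (v X Y ▷ Z) ≫ (α_ (T.obj X) (T.obj Y) Z).hom := by
          simp only [comp_whiskerRight, Category.assoc]
  calc T.map (α_ X Y Z).hom ≫ wψ T v k X (Y ⊗ Z) ≫ (T.obj X ◁ wψ T v k Y Z)
      = T.map (α_ X Y Z).hom ≫ T.map (wη T k X ▷ (Y ⊗ Z)) ≫ v X (Y ⊗ Z) ≫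
          (T.obj X ◁ T.map (wη T k Y ▷ Z)) ≫ (T.obj X ◁ v Y Z) := by
        simp only [wψ, MonoidalCategory.whiskerLeft_comp, Category.assoc]
    _ = T.map (α_ X Y Z).hom ≫ T.map (wη T k X ▷ (Y ⊗ Z)) ≫
          T.map (T.obj X ◁ (wη T k Y ▷ Z)) ≫ v X (T.obj Y ⊗ Z) ≫
          (T.obj X ◁ v Y Z) := by
        rw [reassoc_of% (hvnR X (Y ⊗ Z) (T.obj Y ⊗ Z) (wη T k Y ▷ Z))]
    _ = T.map ((α_ X Y Z).hom ≫ (wη T k X ▷ (Y ⊗ Z)) ≫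
          (T.obj X ◁ (wη T k Y ▷ Z))) ≫ v X (T.obj Y ⊗ Z) ≫
          (T.obj X ◁ v Y Z) := by
        simp only [Functor.map_comp, Category.assoc]
    _ = T.map ((wη T k (X ⊗ Y) ▷ Z) ≫ (T.map (wη T k X ▷ Y) ▷ Z) ≫
          (v X Y ▷ Z) ≫ (α_ (T.obj X) (T.obj Y) Z).hom) ≫
          v X (T.obj Y ⊗ Z) ≫ (T.obj X ◁ v Y Z) := by
        rw [inner]
    _ = T.map (wη T k (X ⊗ Y) ▷ Z) ≫ T.map (T.map (wη T k X ▷ Y) ▷ Z) ≫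
          T.map (v X Y ▷ Z) ≫ T.map (α_ (T.obj X) (T.obj Y) Z).hom ≫
          v X (T.obj Y ⊗ Z) ≫ (T.obj X ◁ v Y Z) := by
        simp only [Functor.map_comp, Category.assoc]
    _ = T.map (wη T k (X ⊗ Y) ▷ Z) ≫ T.map (T.map (wη T k X ▷ Y) ▷ Z) ≫
          v (T.obj X ⊗ Y) Z ≫ (v X Y ▷ T.obj Z) ≫
          (α_ (T.obj X) (T.obj Y) (T.obj Z)).hom := by
        rw [W1 X Y Z]
    _ = T.map (wη T k (X ⊗ Y) ▷ Z) ≫ v (X ⊗ Y) Z ≫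
          (T.map (wη T k X ▷ Y) ▷ T.obj Z) ≫ (v X Y ▷ T.obj Z) ≫
          (α_ (T.obj X) (T.obj Y) (T.obj Z)).hom := by
        rw [reassoc_of% (hvnL (X ⊗ Y) (T.obj X ⊗ Y) (wη T k X ▷ Y) Z)]
    _ = wψ T v k (X ⊗ Y) Z ≫ (wψ T v k X Y ▷ T.obj Z) ≫
          (α_ (T.obj X) (T.obj Y) (T.obj Z)).hom := by
        simp only [wψ, comp_whiskerRight, Category.assoc]

end Lemmas

end SkewWarpingAux

/-- A skew left warping `(T, I, v, v₀, k)` of a monoidal category `V`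
whose object `K` is the unit `I` determines an opmonoidal monad on `V` with
`μ_X = ρ_{TX}⁻¹ ∘ (1_{TX} ⊗ v₀) ∘ v_{X,I} ∘ T(ρ_{TX})`, `η_X = ρ_{TX}⁻¹ ∘ k_X`,
`ψ_{X,Y} = v_{X,Y} ∘ T(η_X ⊗ 1_Y)` and `ψ₀ = v₀`. -/
theorem skew_left_warping_gives_opmonoidal_monad (T : V ⥤ V)
    (v : ∀ X Y : V, T.obj (T.obj X ⊗ Y) ⟶ T.obj X ⊗ T.obj Y)
    (v₀ : T.obj (𝟙_ V) ⟶ 𝟙_ V) (k : ∀ X : V, X ⟶ T.obj X ⊗ 𝟙_ V)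
    (h : IsSkewLeftWarping T (𝟙_ V) v v₀ k) :
    IsOpmonoidalMonad T
      (fun X => T.map (ρ_ (T.obj X)).inv ≫ v X (𝟙_ V) ≫ (T.obj X ◁ v₀) ≫
        (ρ_ (T.obj X)).hom)
      (fun X => k X ≫ (ρ_ (T.obj X)).hom)
      (fun X Y => T.map ((k X ≫ (ρ_ (T.obj X)).hom) ▷ Y) ≫ v X Y)
      v₀ := by
  exact ⟨SkewWarpingAux.mu_nat h, SkewWarpingAux.eta_nat h, SkewWarpingAux.mu_assoc h,
    SkewWarpingAux.mu_left_unit h, SkewWarpingAux.mu_right_unit h,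
    SkewWarpingAux.psi_nat h, SkewWarpingAux.psi_coassoc h,
    SkewWarpingAux.psi_counit_left h, SkewWarpingAux.psi_counit_right h,
    SkewWarpingAux.mu_psi h, SkewWarpingAux.mu_psi0 h,
    SkewWarpingAux.eta_tensor h, SkewWarpingAux.eta_unit h⟩
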